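/- Let R be a commutative ring and A an R-algebra that is generated by n elements as an R-module. Let k be a field, r a natural number, and suppose there exists a surjective ring homomorphism from A onto the matrix ring M_r(k) of r×r matrices over k. Then r² ≤ n. -/

import Mathlib

/-- Let `R` be a commutative ring and `A` an `R`-algebra generated by `n` elements as an
`R`-module. If there is a surjective ring homomorphism from `A` onto the matrix ring
`M_r(k)` over a field `k`, then `r² ≤ n`. -/
theorem sq_le_of_surjective_onto_matrix {R A k : Type*} [CommRing R] [Ring A]
    [Algebra R A] [Field k] {n : ℕ} (s : Fin n → A)
    (hs : Submodule.span R (Set.range s) = ⊤)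
    (r : ℕ) (φ : A →+* Matrix (Fin r) (Fin r) k) (hφ : Function.Surjective φ) :
    r ^ 2 ≤ n := by
  -- images of central elements are scalar matrices
  have central : ∀ c : R, ∃ lam : k,
      φ (algebraMap R A c) = Matrix.scalar (Fin r) lam := by
    intro c
    have : φ (algebraMap R A c) ∈ Set.range (Matrix.scalar (Fin r)) := by
      apply Matrix.mem_range_scalar_of_commute_single
      intro i j _
      obtain ⟨b, hb⟩ := hφ (Matrix.single i j 1)
      rw [← hb]
      show _ * _ = _ * _
      rw [← map_mul, ← map_mul, Algebra.commutes]
    obtain ⟨lam, hlam⟩ := this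
    exact ⟨lam, hlam.symm⟩
  have hspan : Submodule.span k (Set.range (fun i => φ (s i))) = ⊤ := by
    rw [eq_top_iff]
    rintro M -
    obtain ⟨a, rfl⟩ := hφ M
    have ha : a ∈ Submodule.span R (Set.range s) := hs ▸ Submodule.mem_top
    induction ha using Submodule.span_induction with
    | mem x hx =>
      obtain ⟨i, rfl⟩ := hx
      exact Submodule.subset_span ⟨i, rfl⟩
    | zero => simp
    | add x y _ _ hx hy => rw [map_add]; exact Submodule.add_mem _ hx hy
    | smul c x _ hx =>
      rw [Algebra.smul_def, map_mul]
      obtain ⟨lam, hlam⟩ := central c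
      rw [hlam]
      have : Matrix.scalar (Fin r) lam * φ x = lam • φ x := by
        simp [Matrix.scalar_commute, Algebra.smul_def]
        rfl
      rw [this]
      exact Submodule.smul_mem _ _ hx
  have := finrank_le_of_span_eq_top hspan
  simpa [Module.finrank_matrix, pow_two] using this
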